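/- arXiv:1310.5093 — 2 statements merged into one kernel-verified Lean document; each statement's English description precedes it below -/
import Mathlib

section
/- For every integer r ≥ 1 and every real x ≥ 0, lim_{n→∞} n^r·η_{2r}^{(n)}(x) = (−1)^r·X^r / (2^r·r!), where X = x(1+x). -/
open Filter Topology Finset

/-- Baskakov basis functions `v_{k,n}(x) = C(n+k-1, k) x^k (1+x)^{-(n+k)}`. -/
noncomputable def baskakovBasis (n k : ℕ) (x : ℝ) : ℝ :=
  (Nat.choose (n + k - 1) k : ℝ) * x ^ k / (1 + x) ^ (n + k)

/-- Baskakov operator `(V_n f)(x) = Σ_{k≥0} f(k/n) v_{k,n}(x)`. -/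
noncomputable def baskakov (n : ℕ) (f : ℝ → ℝ) (x : ℝ) : ℝ :=
  ∑' k : ℕ, f ((k : ℝ) / n) * baskakovBasis n k x

/-- Polynomials θ_r^{(n)}: θ_0 = 1, θ_1 = 0 and
`n (r+1) θ_{r+1} = X (θ_r' + θ_{r-1})` for r ≥ 1, with X = x(1+x). -/
noncomputable def theta (n : ℕ) : ℕ → ℝ → ℝ
  | 0 => fun _ => 1
  | 1 => fun _ => 0
  | r + 2 => fun x =>
      x * (1 + x) * (deriv (theta n (r + 1)) x + theta n r x) / (n * (r + 2))

/-- Polynomials η_r^{(n)}: η_0 = 1, η_1 = 0 and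
`(n+r)(r+1) η_{r+1} = -r(1+2x) η_r - X η_{r-1}` for r ≥ 1, with X = x(1+x). -/
noncomputable def eta (n : ℕ) : ℕ → ℝ → ℝ
  | 0 => fun _ => 1
  | 1 => fun _ => 0
  | r + 2 => fun x =>
      (-((r + 1 : ℝ) * (1 + 2 * x) * eta n (r + 1) x) - x * (1 + x) * eta n r x) /
        (((n : ℝ) + (r + 1)) * (r + 2))

/-- Rising factorial `(n)_r = n (n+1) ⋯ (n+r-1)`. -/
def risingFactorial (n r : ℕ) : ℕ := ∏ i ∈ Finset.range r, (n + i)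

lemma tendsto_one_div_add (c : ℝ) :
    Tendsto (fun n : ℕ => 1 / ((n : ℝ) + c)) atTop (𝓝 0) := by
  simp only [one_div]
  exact (tendsto_atTop_add_const_right atTop c tendsto_natCast_atTop_atTop).inv_tendsto_atTop

lemma tendsto_n_div_add (c : ℝ) :
    Tendsto (fun n : ℕ => (n : ℝ) / ((n : ℝ) + c)) atTop (𝓝 1) := by
  have h : Tendsto (fun n : ℕ => 1 - c * (1 / ((n : ℝ) + c))) atTop (𝓝 (1 - c * 0)) :=
    tendsto_const_nhds.sub (tendsto_const_nhds.mul (tendsto_one_div_add c))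
  rw [mul_zero, sub_zero] at h
  refine h.congr' ?_
  filter_upwards [eventually_gt_atTop ⌈|c|⌉₊] with n hn
  have hc : (0:ℝ) < (n : ℝ) + c := by
    have : |c| < (n:ℝ) := by
      calc |c| ≤ ⌈|c|⌉₊ := Nat.le_ceil _
      _ < n := by exact_mod_cast hn
    nlinarith [neg_abs_le c]
  field_simp
  ring

noncomputable def Bval (x : ℝ) (m : ℕ) : ℝ :=
  (-1 : ℝ) ^ m * (x * (1 + x)) ^ m / (2 ^ m * (Nat.factorial m : ℝ))

noncomputable def Cval (x : ℝ) : ℕ → ℝ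
  | 0 => 0
  | m + 1 => (-((2*(m:ℝ)+2) * (1+2*x) * Bval x (m+1)) - x*(1+x) * Cval x m) / (2*m+3)

lemma eta_key (x : ℝ) (m : ℕ) :
    Tendsto (fun n : ℕ => (n : ℝ) ^ m * eta n (2*m) x) atTop (𝓝 (Bval x m)) ∧
    Tendsto (fun n : ℕ => (n : ℝ) ^ (m+1) * eta n (2*m+1) x) atTop (𝓝 (Cval x m)) := by
  induction m with
  | zero =>
    constructor
    · simpa [eta, Bval] using (tendsto_const_nhds : Tendsto (fun _ : ℕ => (1:ℝ)) atTop (𝓝 1))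
    · simpa [eta, Cval] using (tendsto_const_nhds : Tendsto (fun _ : ℕ => (0:ℝ)) atTop (𝓝 0))
  | succ m ih =>
    obtain ⟨hB, hC⟩ := ih
    have hne : ∀ᶠ n : ℕ in atTop, (n:ℝ) + (2*m+1) ≠ 0 := by
      filter_upwards [eventually_ge_atTop 1] with n hn
      positivity
    -- even step
    have hB2 : Tendsto (fun n : ℕ => (n : ℝ) ^ (m+1) * eta n (2*(m+1)) x) atTop
        (𝓝 (Bval x (m+1))) := by
      have heq : ∀ᶠ n : ℕ in atTop, (n:ℝ)^(m+1) * eta n (2*(m+1)) x =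
          (-((2*(m:ℝ)+1) * (1+2*x)) * ((n:ℝ)^(m+1) * eta n (2*m+1) x) * (1/((n:ℝ)+(2*m+1)))
            - x*(1+x) * ((n:ℝ)^m * eta n (2*m) x) * ((n:ℝ)/((n:ℝ)+(2*m+1)))) / (2*m+2) := by
        filter_upwards [hne] with n h
        rw [show 2*(m+1) = (2*m)+2 from rfl]
        simp only [eta]
        push_cast
        field_simp
        ring
      have hlim : Tendsto (fun n : ℕ =>
          (-((2*(m:ℝ)+1) * (1+2*x)) * ((n:ℝ)^(m+1) * eta n (2*m+1) x) * (1/((n:ℝ)+(2*m+1)))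
            - x*(1+x) * ((n:ℝ)^m * eta n (2*m) x) * ((n:ℝ)/((n:ℝ)+(2*m+1)))) / (2*m+2)) atTop
          (𝓝 ((-((2*(m:ℝ)+1) * (1+2*x)) * Cval x m * 0
            - x*(1+x) * Bval x m * 1) / (2*m+2))) :=
        (((tendsto_const_nhds.mul hC).mul (tendsto_one_div_add _)).sub
          ((tendsto_const_nhds.mul hB).mul (tendsto_n_div_add _))).div_const _
      have hval : (-((2*(m:ℝ)+1) * (1+2*x)) * Cval x m * 0
          - x*(1+x) * Bval x m * 1) / (2*m+2) = Bval x (m+1) := by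
        simp only [Bval, pow_succ, Nat.factorial_succ]
        push_cast
        have h1 : (Nat.factorial m : ℝ) ≠ 0 := Nat.cast_ne_zero.2 (Nat.factorial_ne_zero m)
        have h2 : (2:ℝ)^m ≠ 0 := by positivity
        have h3 : (2*(m:ℝ)+2) ≠ 0 := by positivity
        field_simp
        ring
      rw [← hval]
      exact hlim.congr' (heq.mono fun _ h => h.symm)
    refine ⟨hB2, ?_⟩
    -- odd step
    have hne2 : ∀ᶠ n : ℕ in atTop, (n:ℝ) + (2*m+2) ≠ 0 := by
      filter_upwards [eventually_ge_atTop 1] with n hn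
      positivity
    have heq : ∀ᶠ n : ℕ in atTop, (n:ℝ)^(m+2) * eta n (2*(m+1)+1) x =
        (-((2*(m:ℝ)+2) * (1+2*x)) * ((n:ℝ)^(m+1) * eta n (2*(m+1)) x) * ((n:ℝ)/((n:ℝ)+(2*m+2)))
          - x*(1+x) * ((n:ℝ)^(m+1) * eta n (2*m+1) x) * ((n:ℝ)/((n:ℝ)+(2*m+2)))) / (2*m+3) := by
      filter_upwards [hne2] with n h
      rw [show 2*(m+1)+1 = (2*m+1)+2 from rfl, show 2*(m+1) = (2*m)+2 from rfl]
      simp only [eta]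
      push_cast
      field_simp
      ring
    have hlim : Tendsto (fun n : ℕ =>
        (-((2*(m:ℝ)+2) * (1+2*x)) * ((n:ℝ)^(m+1) * eta n (2*(m+1)) x) * ((n:ℝ)/((n:ℝ)+(2*m+2)))
          - x*(1+x) * ((n:ℝ)^(m+1) * eta n (2*m+1) x) * ((n:ℝ)/((n:ℝ)+(2*m+2)))) / (2*m+3)) atTop
        (𝓝 ((-((2*(m:ℝ)+2) * (1+2*x)) * Bval x (m+1) * 1
          - x*(1+x) * Cval x m * 1) / (2*m+3))) :=
      (((tendsto_const_nhds.mul hB2).mul (tendsto_n_div_add _)).sub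
        ((tendsto_const_nhds.mul hC).mul (tendsto_n_div_add _))).div_const _
    have hval : (-((2*(m:ℝ)+2) * (1+2*x)) * Bval x (m+1) * 1
        - x*(1+x) * Cval x m * 1) / (2*m+3) = Cval x (m+1) := by
      simp only [Cval]
      ring
    rw [← hval]
    exact hlim.congr' (heq.mono fun _ h => h.symm)


/-- `lim_{n→∞} n^r η_{2r}^{(n)}(x) = (-1)^r X^r / (2^r r!)`. -/
theorem eta_even_asymptotics (r : ℕ) (hr : 1 ≤ r) (x : ℝ) (hx : 0 ≤ x) :
    Filter.Tendsto (fun n : ℕ => (n : ℝ) ^ r * eta n (2 * r) x) Filter.atTop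
      (nhds ((-1 : ℝ) ^ r * (x * (1 + x)) ^ r / (2 ^ r * (Nat.factorial r : ℝ)))) := by
  exact (eta_key x r).1
end

section
/- Let n ≥ 1 be an integer. Then for every integer k ≥ 0 and every real x, the polynomials η_i^{(n)} satisfy the triangular linear system Σ_{i=0}^{k} ( x^{k-i} / (k-i)! )·η_i^{(n)}(x) = [nx]_k / ( k!·(n)_k ), where [t]_k = t(t-1)⋯(t-k+1) is the falling factorial and (n)_k = n(n+1)⋯(n+k-1) is the rising factorial. Equivalently, the inverse Baskakov operator U_n = Σ_{r≥0} η_r^{(n)} D^r satisfies U_n x^k = [nx]_k/(n)_k. -/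
open Filter Topology Finset

section Aux

/-- `dd x j = x^j / j!`. -/
noncomputable def dd (x : ℝ) (j : ℕ) : ℝ := x ^ j / (Nat.factorial j : ℝ)

/-- The partial sums of the triangular system. -/
noncomputable def TT (n : ℕ) (x : ℝ) (k : ℕ) : ℝ :=
  ∑ i ∈ Finset.range (k + 1), dd x (k - i) * eta n i x

lemma eta_zero (n : ℕ) (x : ℝ) : eta n 0 x = 1 := rfl

lemma eta_one (n : ℕ) (x : ℝ) : eta n 1 x = 0 := rfl

lemma eta_rec (n : ℕ) (r : ℕ) (x : ℝ) :
    ((n : ℝ) + ((r : ℝ) + 1)) * ((r : ℝ) + 2) * eta n (r + 2) x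
      = -(((r : ℝ) + 1) * (1 + 2 * x) * eta n (r + 1) x) - x * (1 + x) * eta n r x := by
  have hd : ((n : ℝ) + ((r : ℝ) + 1)) * ((r : ℝ) + 2) ≠ 0 := by positivity
  rw [show eta n (r + 2) x =
      (-((r + 1 : ℝ) * (1 + 2 * x) * eta n (r + 1) x) - x * (1 + x) * eta n r x) /
        (((n : ℝ) + (r + 1)) * (r + 2)) from rfl]
  field_simp

lemma dd_zero (x : ℝ) : dd x 0 = 1 := by simp [dd]

lemma dd_succ (x : ℝ) (j : ℕ) : ((j : ℝ) + 1) * dd x (j + 1) = x * dd x j := by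
  have h : (Nat.factorial j : ℝ) ≠ 0 := Nat.cast_ne_zero.2 (Nat.factorial_ne_zero j)
  have hj : ((j : ℝ) + 1) ≠ 0 := by positivity
  simp only [dd, Nat.factorial_succ, Nat.cast_mul, pow_succ]
  push_cast
  field_simp

lemma L0 (n : ℕ) (x : ℝ) (m : ℕ) :
    ∑ i ∈ Finset.range (m + 2), ((m + 1 - i : ℕ) : ℝ) * dd x (m + 1 - i) * eta n i x
      = x * TT n x m := by
  rw [Finset.sum_range_succ]
  have hlast : ((m + 1 - (m + 1) : ℕ) : ℝ) * dd x (m + 1 - (m + 1)) * eta n (m + 1) x = 0 := by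
    simp
  rw [hlast, add_zero]
  have hcongr : ∀ i ∈ Finset.range (m + 1),
      ((m + 1 - i : ℕ) : ℝ) * dd x (m + 1 - i) * eta n i x
        = x * (dd x (m - i) * eta n i x) := by
    intro i hi
    have hile : i ≤ m := Nat.lt_succ_iff.1 (Finset.mem_range.1 hi)
    have h2 : m + 1 - i = (m - i) + 1 := by omega
    rw [h2]
    push_cast
    linear_combination eta n i x * dd_succ x (m - i)
  rw [Finset.sum_congr rfl hcongr, ← Finset.mul_sum]
  rfl

lemma L1 (n : ℕ) (x : ℝ) (m : ℕ) :
    ∑ i ∈ Finset.range (m + 2), (i : ℝ) * dd x (m + 1 - i) * eta n i x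
      = ((m : ℝ) + 1) * TT n x (m + 1) - x * TT n x m := by
  have hcongr : ∀ i ∈ Finset.range (m + 2),
      (i : ℝ) * dd x (m + 1 - i) * eta n i x
        = ((m : ℝ) + 1) * (dd x (m + 1 - i) * eta n i x)
            - ((m + 1 - i : ℕ) : ℝ) * dd x (m + 1 - i) * eta n i x := by
    intro i hi
    have hile : i ≤ m + 1 := Nat.lt_succ_iff.1 (Finset.mem_range.1 hi)
    have : ((m + 1 - i : ℕ) : ℝ) = ((m : ℝ) + 1) - (i : ℝ) := by
      push_cast [Nat.cast_sub (by omega : i ≤ m + 1)]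
      ring
    rw [this]; ring
  rw [Finset.sum_congr rfl hcongr, Finset.sum_sub_distrib, ← Finset.mul_sum, L0]
  rfl

lemma L0' (n : ℕ) (x : ℝ) (m : ℕ) :
    ∑ i ∈ Finset.range (m + 3), (i : ℝ) * ((m + 2 - i : ℕ) : ℝ) * dd x (m + 2 - i) * eta n i x
      = x * ∑ i ∈ Finset.range (m + 2), (i : ℝ) * dd x (m + 1 - i) * eta n i x := by
  rw [Finset.sum_range_succ]
  have hlast : ((m + 2 : ℕ) : ℝ) * ((m + 2 - (m + 2) : ℕ) : ℝ) * dd x (m + 2 - (m + 2))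
      * eta n (m + 2) x = 0 := by simp
  rw [hlast, add_zero]
  have hcongr : ∀ i ∈ Finset.range (m + 2),
      (i : ℝ) * ((m + 2 - i : ℕ) : ℝ) * dd x (m + 2 - i) * eta n i x
        = x * ((i : ℝ) * dd x (m + 1 - i) * eta n i x) := by
    intro i hi
    have hile : i ≤ m + 1 := Nat.lt_succ_iff.1 (Finset.mem_range.1 hi)
    have h2 : m + 2 - i = (m + 1 - i) + 1 := by omega
    rw [h2]
    push_cast
    linear_combination (eta n i x * (i : ℝ)) * dd_succ x (m + 1 - i)
  rw [Finset.sum_congr rfl hcongr, ← Finset.mul_sum]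

lemma L2 (n : ℕ) (x : ℝ) (m : ℕ) :
    ∑ i ∈ Finset.range (m + 3), (i : ℝ) * (i : ℝ) * dd x (m + 2 - i) * eta n i x
      = ((m : ℝ) + 2) * (((m : ℝ) + 2) * TT n x (m + 2) - x * TT n x (m + 1))
          - x * (((m : ℝ) + 1) * TT n x (m + 1) - x * TT n x m) := by
  have hcongr : ∀ i ∈ Finset.range (m + 3),
      (i : ℝ) * (i : ℝ) * dd x (m + 2 - i) * eta n i x
        = ((m : ℝ) + 2) * ((i : ℝ) * dd x (m + 2 - i) * eta n i x)
            - (i : ℝ) * ((m + 2 - i : ℕ) : ℝ) * dd x (m + 2 - i) * eta n i x := by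
    intro i hi
    have hile : i ≤ m + 2 := Nat.lt_succ_iff.1 (Finset.mem_range.1 hi)
    have : ((m + 2 - i : ℕ) : ℝ) = ((m : ℝ) + 2) - (i : ℝ) := by
      push_cast [Nat.cast_sub (by omega : i ≤ m + 2)]
      ring
    rw [this]; ring
  rw [Finset.sum_congr rfl hcongr, Finset.sum_sub_distrib, ← Finset.mul_sum, L0', L1 n x (m + 1),
    L1 n x m]
  show _ = _ - _
  push_cast
  ring_nf

lemma key (n : ℕ) (x : ℝ) (k : ℕ) :
    ((k : ℝ) + 2) * ((n : ℝ) + ((k : ℝ) + 1)) * TT n x (k + 2)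
      = ((n : ℝ) * x - ((k : ℝ) + 1)) * TT n x (k + 1) := by
  have hAval : ∑ j ∈ Finset.range (k + 3),
        ((n : ℝ) + (j : ℝ) - 1) * (j : ℝ) * dd x (k + 2 - j) * eta n j x
      = ((k : ℝ) + 2) * ((n : ℝ) + (k : ℝ) + 1) * TT n x (k + 2)
          - x * ((n : ℝ) + 2 * (k : ℝ) + 2) * TT n x (k + 1) + x ^ 2 * TT n x k := by
    have hcongr : ∀ j ∈ Finset.range (k + 3),
        ((n : ℝ) + (j : ℝ) - 1) * (j : ℝ) * dd x (k + 2 - j) * eta n j x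
          = ((n : ℝ) - 1) * ((j : ℝ) * dd x (k + 2 - j) * eta n j x)
              + (j : ℝ) * (j : ℝ) * dd x (k + 2 - j) * eta n j x := by
      intro j _; ring
    rw [Finset.sum_congr rfl hcongr, Finset.sum_add_distrib, ← Finset.mul_sum, L1 n x (k + 1),
      L2 n x k]
    push_cast
    ring
  have hBval : ∑ j ∈ Finset.range (k + 2), (j : ℝ) * dd x (k + 1 - j) * eta n j x
      = ((k : ℝ) + 1) * TT n x (k + 1) - x * TT n x k := L1 n x k
  have hA2 : ∑ j ∈ Finset.range (k + 3),
        ((n : ℝ) + (j : ℝ) - 1) * (j : ℝ) * dd x (k + 2 - j) * eta n j x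
      = ∑ i ∈ Finset.range (k + 1),
          dd x (k - i) * (((n : ℝ) + ((i : ℝ) + 1)) * ((i : ℝ) + 2) * eta n (i + 2) x) := by
    rw [Finset.sum_range_succ', Finset.sum_range_succ']
    simp only [Nat.cast_zero, Nat.cast_one, mul_zero, zero_mul, add_zero, zero_add, eta_one]
    apply Finset.sum_congr rfl
    intro i hi
    have h2 : k + 2 - (i + 1 + 1) = k - i := by omega
    rw [h2]
    push_cast
    ring
  have hB2 : ∑ j ∈ Finset.range (k + 2), (j : ℝ) * dd x (k + 1 - j) * eta n j x
      = ∑ i ∈ Finset.range (k + 1),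
          dd x (k - i) * (((i : ℝ) + 1) * eta n (i + 1) x) := by
    rw [Finset.sum_range_succ']
    simp only [Nat.cast_zero, zero_mul, add_zero]
    apply Finset.sum_congr rfl
    intro i hi
    have h2 : k + 1 - (i + 1) = k - i := by omega
    rw [h2]
    push_cast
    ring
  have star : (∑ j ∈ Finset.range (k + 3),
        ((n : ℝ) + (j : ℝ) - 1) * (j : ℝ) * dd x (k + 2 - j) * eta n j x)
      + (1 + 2 * x) * (∑ j ∈ Finset.range (k + 2),
          (j : ℝ) * dd x (k + 1 - j) * eta n j x)
      + x * (1 + x) * TT n x k = 0 := by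
    rw [hA2, hB2]
    have hTT : x * (1 + x) * TT n x k
        = ∑ i ∈ Finset.range (k + 1), dd x (k - i) * (x * (1 + x) * eta n i x) := by
      rw [TT, Finset.mul_sum]
      apply Finset.sum_congr rfl
      intro i _; ring
    rw [hTT, Finset.mul_sum, ← Finset.sum_add_distrib, ← Finset.sum_add_distrib]
    apply Finset.sum_eq_zero
    intro i _
    have h := eta_rec n i x
    have hb : ((n : ℝ) + ((i : ℝ) + 1)) * ((i : ℝ) + 2) * eta n (i + 2) x
        + ((i : ℝ) + 1) * (1 + 2 * x) * eta n (i + 1) x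
        + x * (1 + x) * eta n i x = 0 := by linarith [h]
    calc dd x (k - i) * (((n : ℝ) + ((i : ℝ) + 1)) * ((i : ℝ) + 2) * eta n (i + 2) x)
          + (1 + 2 * x) * (dd x (k - i) * (((i : ℝ) + 1) * eta n (i + 1) x))
          + dd x (k - i) * (x * (1 + x) * eta n i x)
        = dd x (k - i) * (((n : ℝ) + ((i : ℝ) + 1)) * ((i : ℝ) + 2) * eta n (i + 2) x
            + ((i : ℝ) + 1) * (1 + 2 * x) * eta n (i + 1) x
            + x * (1 + x) * eta n i x) := by ring
      _ = 0 := by rw [hb, mul_zero]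
  rw [hAval, hBval] at star
  linear_combination star

lemma rf_pos (n : ℕ) (hn : 1 ≤ n) (k : ℕ) : 0 < risingFactorial n k := by
  apply Finset.prod_pos
  intro i _
  omega

lemma TT_eq (n : ℕ) (hn : 1 ≤ n) (k : ℕ) (x : ℝ) :
    TT n x k = (∏ i ∈ Finset.range k, ((n : ℝ) * x - i)) /
        ((Nat.factorial k : ℝ) * (risingFactorial n k : ℝ)) := by
  induction k with
  | zero => simp [TT, dd_zero, eta_zero, risingFactorial]
  | succ k ih =>
    match k, ih with
    | 0, _ =>
      have hn0 : (n : ℝ) ≠ 0 := Nat.cast_ne_zero.2 (by omega)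
      simp only [TT, Finset.sum_range_succ, Finset.sum_range_zero, risingFactorial,
        Finset.prod_range_succ, Finset.prod_range_zero, eta_zero, eta_one, dd_zero]
      simp [dd]
      field_simp
    | k + 1, ih =>
      have hk := key n x k
      rw [ih] at hk
      have hfacpos : (0 : ℝ) < (Nat.factorial (k + 1) : ℝ) := by
        exact_mod_cast Nat.factorial_pos (k + 1)
      have hrfpos : (0 : ℝ) < (risingFactorial n (k + 1) : ℝ) := by
        exact_mod_cast rf_pos n hn (k + 1)
      have hfac : (Nat.factorial (k + 2) : ℝ) = ((k : ℝ) + 2) * (Nat.factorial (k + 1) : ℝ) := by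
        rw [Nat.factorial_succ]
        push_cast
        ring
      have hrf : (risingFactorial n (k + 2) : ℝ)
          = (risingFactorial n (k + 1) : ℝ) * ((n : ℝ) + ((k : ℝ) + 1)) := by
        rw [show risingFactorial n (k + 2) = risingFactorial n (k + 1) * (n + (k + 1)) from
          Finset.prod_range_succ _ _]
        push_cast
        ring
      have hP : (∏ i ∈ Finset.range (k + 2), ((n : ℝ) * x - i))
          = (∏ i ∈ Finset.range (k + 1), ((n : ℝ) * x - i)) * ((n : ℝ) * x - ((k : ℝ) + 1)) := by
        rw [Finset.prod_range_succ]
        push_cast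
        ring
      rw [hfac, hrf, hP]
      have hk2 : ((k : ℝ) + 2) ≠ 0 := by positivity
      have hnk : ((n : ℝ) + ((k : ℝ) + 1)) ≠ 0 := by positivity
      rw [eq_div_iff (by positivity)]
      field_simp at hk
      linear_combination hk

end Aux

/-- the polynomials `η_i^{(n)}` solve the triangular linear system
`Σ_{i=0}^k x^{k-i}/(k-i)! η_i^{(n)}(x) = [nx]_k / (k! (n)_k)`, i.e. `U_n x^k = [nx]_k/(n)_k`. -/
theorem eta_triangular_system (n : ℕ) (hn : 1 ≤ n) (k : ℕ) (x : ℝ) :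
    ∑ i ∈ Finset.range (k + 1), x ^ (k - i) / (Nat.factorial (k - i) : ℝ) * eta n i x
      = (∏ i ∈ Finset.range k, ((n : ℝ) * x - i)) /
          ((Nat.factorial k : ℝ) * (risingFactorial n k : ℝ)) := by
  have h : TT n x k = _ := TT_eq n hn k x
  simpa [TT, dd] using h
end
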